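/- The function f(x₁, x₂) = √(2 x₁ x₂) on ℝ²₊ is a self-dual antinorm: it is concave, positively homogeneous, nonnegative, and inf{y₁x₁ + y₂x₂ : x ∈ ℝ²₊, √(2x₁x₂) ≥ 1} = √(2 y₁ y₂) for every y ∈ ℝ²₊. -/

import Mathlib

/-- The nonnegative orthant in ℝ^d. -/
def orthant (d : ℕ) : Set (EuclideanSpace ℝ (Fin d)) := {x | ∀ i, 0 ≤ x i}

/-- An antinorm on ℝ^d₊: concave, positively homogeneous, nonnegative,
and positive somewhere. -/
def IsAntinorm {d : ℕ} (f : EuclideanSpace ℝ (Fin d) → ℝ) : Prop :=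
  ConcaveOn ℝ (orthant d) f ∧
  (∀ x ∈ orthant d, ∀ c : ℝ, 0 ≤ c → f (c • x) = c * f x) ∧
  (∀ x ∈ orthant d, 0 ≤ f x) ∧
  (∃ x ∈ orthant d, 0 < f x)

/-- The dual antinorm f*(y) = inf{(y,x) : x ∈ ℝ^d₊, f(x) ≥ 1}. -/
noncomputable def dualAntinorm {d : ℕ} (f : EuclideanSpace ℝ (Fin d) → ℝ)
    (y : EuclideanSpace ℝ (Fin d)) : ℝ :=
  sInf ((fun x => (inner ℝ y x : ℝ)) '' {x | x ∈ orthant d ∧ 1 ≤ f x})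

lemma aux_concave :
    ConcaveOn ℝ (orthant 2)
      (fun x : EuclideanSpace ℝ (Fin 2) => Real.sqrt (2 * x 0 * x 1)) := by
  constructor
  · intro x hx y hy a b ha hb hab
    intro i
    have := hx i; have := hy i
    simp only [PiLp.add_apply, PiLp.smul_apply, smul_eq_mul]
    positivity
  · intro x hx y hy a b ha hb hab
    simp only [PiLp.add_apply, PiLp.smul_apply, smul_eq_mul]
    have hx0 := hx 0; have hx1 := hx 1; have hy0 := hy 0; have hy1 := hy 1
    apply Real.le_sqrt_of_sq_le
    have hp : Real.sqrt (2 * x 0 * x 1) ^ 2 = 2 * x 0 * x 1 := by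
      rw [Real.sq_sqrt]; positivity
    have hq : Real.sqrt (2 * y 0 * y 1) ^ 2 = 2 * y 0 * y 1 := by
      rw [Real.sq_sqrt]; positivity
    have hpq : Real.sqrt (2 * x 0 * x 1) * Real.sqrt (2 * y 0 * y 1)
        ≤ x 0 * y 1 + x 1 * y 0 := by
      have h1 : Real.sqrt (2 * x 0 * x 1) * Real.sqrt (2 * y 0 * y 1)
          = 2 * Real.sqrt ((x 0 * y 1) * (x 1 * y 0)) := by
        rw [← Real.sqrt_mul (by positivity)]
        rw [show (2 * x 0 * x 1) * (2 * y 0 * y 1) = 4 * ((x 0 * y 1) * (x 1 * y 0)) by ring]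
        rw [show (4:ℝ) = 2^2 by norm_num, Real.sqrt_mul (by positivity), Real.sqrt_sq (by norm_num)]
      rw [h1]
      have := Real.sqrt_mul_self (mul_nonneg hx0 hy1)
      have h2 : Real.sqrt ((x 0 * y 1) * (x 1 * y 0))
          = Real.sqrt (x 0 * y 1) * Real.sqrt (x 1 * y 0) :=
        Real.sqrt_mul (by positivity) _
      rw [h2]
      nlinarith [sq_nonneg (Real.sqrt (x 0 * y 1) - Real.sqrt (x 1 * y 0)),
        Real.sq_sqrt (mul_nonneg hx0 hy1), Real.sq_sqrt (mul_nonneg hx1 hy0)]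
    have hps : 0 ≤ Real.sqrt (2 * x 0 * x 1) := Real.sqrt_nonneg _
    have hqs : 0 ≤ Real.sqrt (2 * y 0 * y 1) := Real.sqrt_nonneg _
    have e1 : a^2 * Real.sqrt (2 * x 0 * x 1)^2 = a^2 * (2 * x 0 * x 1) := by rw [hp]
    have e2 : b^2 * Real.sqrt (2 * y 0 * y 1)^2 = b^2 * (2 * y 0 * y 1) := by rw [hq]
    have e3 : 2*(a*b)*(Real.sqrt (2 * x 0 * x 1) * Real.sqrt (2 * y 0 * y 1))
        ≤ 2*(a*b)*(x 0 * y 1 + x 1 * y 0) :=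
      mul_le_mul_of_nonneg_left hpq (by positivity)
    nlinarith [e1, e2, e3]

lemma aux_lower (y : EuclideanSpace ℝ (Fin 2)) (hy0 : 0 ≤ y 0) (hy1 : 0 ≤ y 1)
    (x : EuclideanSpace ℝ (Fin 2)) (hx0 : 0 ≤ x 0) (hx1 : 0 ≤ x 1)
    (hf : 1 ≤ Real.sqrt (2 * x 0 * x 1)) :
    Real.sqrt (2 * y 0 * y 1) ≤ y 0 * x 0 + y 1 * x 1 := by
  have h2 : (1:ℝ) ≤ 2 * x 0 * x 1 := by
    nlinarith [Real.sq_sqrt (show (0:ℝ) ≤ 2 * x 0 * x 1 by positivity),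
      Real.sqrt_nonneg (2 * x 0 * x 1)]
  have key : 2 * y 0 * y 1 ≤ (y 0 * x 0 + y 1 * x 1) ^ 2 := by
    nlinarith [sq_nonneg (y 0 * x 0 - y 1 * x 1),
      mul_nonneg (mul_nonneg hy0 hy1) (sub_nonneg.mpr h2)]
  calc Real.sqrt (2 * y 0 * y 1) ≤ Real.sqrt ((y 0 * x 0 + y 1 * x 1) ^ 2) :=
        Real.sqrt_le_sqrt key
    _ = y 0 * x 0 + y 1 * x 1 := Real.sqrt_sq (by positivity)

/-- f(x₁,x₂) = √(2x₁x₂) is a self-dual antinorm on ℝ²₊. -/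
theorem stmt_14 :
    ConcaveOn ℝ (orthant 2)
      (fun x : EuclideanSpace ℝ (Fin 2) => Real.sqrt (2 * x 0 * x 1)) ∧
    (∀ x ∈ orthant 2, ∀ c : ℝ, 0 ≤ c →
      Real.sqrt (2 * (c • x : EuclideanSpace ℝ (Fin 2)) 0 *
          (c • x : EuclideanSpace ℝ (Fin 2)) 1) =
        c * Real.sqrt (2 * x 0 * x 1)) ∧
    (∀ x ∈ orthant 2, 0 ≤ Real.sqrt (2 * x 0 * x 1)) ∧
    (∀ y ∈ orthant 2,
      dualAntinorm
        (fun x : EuclideanSpace ℝ (Fin 2) => Real.sqrt (2 * x 0 * x 1)) y =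
        Real.sqrt (2 * y 0 * y 1)) := by
  refine ⟨aux_concave, ?_, ?_, ?_⟩
  · intro x hx c hc
    simp only [PiLp.smul_apply, smul_eq_mul]
    rw [show 2 * (c * x 0) * (c * x 1) = c^2 * (2 * x 0 * x 1) by ring,
      Real.sqrt_mul (by positivity), Real.sqrt_sq hc]
  · intro x hx
    exact Real.sqrt_nonneg _
  · intro y hy
    have hy0 := hy 0; have hy1 := hy 1
    unfold dualAntinorm
    have hmem : ∀ a b : ℝ, 0 ≤ a → 0 ≤ b → 1 ≤ Real.sqrt (2 * a * b) →
        y 0 * a + y 1 * b ∈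
          ((fun x => (inner ℝ y x : ℝ)) ''
            {x | x ∈ orthant 2 ∧ 1 ≤ Real.sqrt (2 * x 0 * x 1)}) := by
      intro a b ha hb hab
      refine ⟨(WithLp.equiv 2 (Fin 2 → ℝ)).symm ![a, b], ⟨?_, ?_⟩, ?_⟩
      · intro i; fin_cases i <;> simpa
      · simpa using hab
      · simp [PiLp.inner_apply, Fin.sum_univ_two, mul_comm]
    have hbdd : ∀ z ∈ ((fun x => (inner ℝ y x : ℝ)) ''
        {x | x ∈ orthant 2 ∧ 1 ≤ Real.sqrt (2 * x 0 * x 1)}),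
        Real.sqrt (2 * y 0 * y 1) ≤ z := by
      rintro z ⟨x, ⟨hxo, hxf⟩, rfl⟩
      have : (inner ℝ y x : ℝ) = y 0 * x 0 + y 1 * x 1 := by
        simp [PiLp.inner_apply, Fin.sum_univ_two, mul_comm]
      show Real.sqrt (2 * y 0 * y 1) ≤ (inner ℝ y x : ℝ)
      rw [this]
      exact aux_lower y hy0 hy1 x (hxo 0) (hxo 1) hxf
    refine le_antisymm ?_ (le_csInf ?_ hbdd)
    · -- sInf ≤ √(2 y₀ y₁)
      rcases eq_or_lt_of_le hy0 with h0 | h0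
      · -- y 0 = 0 : sqrt = 0, show sInf ≤ 0
        have hsz : Real.sqrt (2 * y 0 * y 1) = 0 := by
          rw [← h0]; simp
        rw [hsz]
        have hle : ∀ ε > (0:ℝ), sInf ((fun x => (inner ℝ y x : ℝ)) ''
            {x | x ∈ orthant 2 ∧ 1 ≤ Real.sqrt (2 * x 0 * x 1)}) ≤ ε := by
          intro ε hε
          set t : ℝ := max 1 (y 1 / ε) with ht
          have ht1 : (1:ℝ) ≤ t := le_max_left _ _
          have htpos : 0 < t := lt_of_lt_of_le one_pos ht1
          have hmem' := hmem t (1 / (2 * t)) (by positivity) (by positivity) ?_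
          · refine le_trans (csInf_le ⟨_, hbdd⟩ hmem') ?_
            rw [← h0, zero_mul, zero_add]
            have hyt : y 1 ≤ t * ε := (div_le_iff₀ hε).mp (le_max_right _ _)
            have h2t : (0:ℝ) < 2 * t := by positivity
            rw [mul_one_div, div_le_iff₀ h2t]
            nlinarith [mul_pos hε htpos]
          · rw [show 2 * t * (1 / (2 * t)) = 1 by field_simp]
            simp
        exact le_of_forall_pos_le_add fun ε hε => by simpa using hle ε hε
      · rcases eq_or_lt_of_le hy1 with h1 | h1
        · have hsz : Real.sqrt (2 * y 0 * y 1) = 0 := by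
            rw [← h1]; simp
          rw [hsz]
          have hle : ∀ ε > (0:ℝ), sInf ((fun x => (inner ℝ y x : ℝ)) ''
              {x | x ∈ orthant 2 ∧ 1 ≤ Real.sqrt (2 * x 0 * x 1)}) ≤ ε := by
            intro ε hε
            set t : ℝ := max 1 (y 0 / ε) with ht
            have ht1 : (1:ℝ) ≤ t := le_max_left _ _
            have htpos : 0 < t := lt_of_lt_of_le one_pos ht1
            have hmem' := hmem (1 / (2 * t)) t (by positivity) (by positivity) ?_
            · refine le_trans (csInf_le ⟨_, hbdd⟩ hmem') ?_
              rw [← h1, zero_mul, add_zero]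
              have hyt : y 0 ≤ t * ε := (div_le_iff₀ hε).mp (le_max_right _ _)
              have h2t : (0:ℝ) < 2 * t := by positivity
              rw [mul_one_div, div_le_iff₀ h2t]
              nlinarith [mul_pos hε htpos]
            · rw [show 2 * (1 / (2 * t)) * t = 1 by field_simp]
              simp
          exact le_of_forall_pos_le_add fun ε hε => by simpa using hle ε hε
        · -- y 0 > 0 and y 1 > 0 : infimum attained
          set a : ℝ := Real.sqrt (y 1 / (2 * y 0)) with ha
          set b : ℝ := Real.sqrt (y 0 / (2 * y 1)) with hb
          have hasq : a ^ 2 = y 1 / (2 * y 0) := Real.sq_sqrt (by positivity)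
          have hbsq : b ^ 2 = y 0 / (2 * y 1) := Real.sq_sqrt (by positivity)
          have hasq' : 2 * y 0 * a ^ 2 = y 1 := by
            rw [hasq]; field_simp
          have hbsq' : 2 * y 1 * b ^ 2 = y 0 := by
            rw [hbsq]; field_simp
          clear hasq hbsq
          have hab : 2 * a * b = 1 := by
            have hsq : (2 * a * b) ^ 2 = 1 := by
              have h4 : (2 * y 0 * a ^ 2) * (2 * y 1 * b ^ 2) = y 1 * y 0 := by
                rw [hasq', hbsq']
              have hy01 : 0 < y 0 * y 1 := mul_pos h0 h1
              nlinarith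
            have h2ab : 0 ≤ 2 * a * b := by positivity
            nlinarith
          have hmem' := hmem a b (Real.sqrt_nonneg _) (Real.sqrt_nonneg _)
            (by rw [hab]; simp)
          refine le_trans (csInf_le ⟨_, hbdd⟩ hmem') ?_
          have hval : y 0 * a + y 1 * b = Real.sqrt (2 * y 0 * y 1) := by
            have h1 : y 0 * a = Real.sqrt (2 * y 0 * y 1) / 2 := by
              have hsq1 : 4 * (y 0 * a) ^ 2 = 2 * y 0 * y 1 := by
                nlinarith [hasq']
              have hs : Real.sqrt (2 * y 0 * y 1) ^ 2 = 2 * y 0 * y 1 :=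
                Real.sq_sqrt (by positivity)
              have hnn : 0 ≤ y 0 * a := by positivity
              have hnn2 : 0 ≤ Real.sqrt (2 * y 0 * y 1) := Real.sqrt_nonneg _
              nlinarith
            have h2 : y 1 * b = Real.sqrt (2 * y 0 * y 1) / 2 := by
              have hsq2 : 4 * (y 1 * b) ^ 2 = 2 * y 0 * y 1 := by
                nlinarith [hbsq']
              have hs : Real.sqrt (2 * y 0 * y 1) ^ 2 = 2 * y 0 * y 1 :=
                Real.sq_sqrt (by positivity)
              have hnn : 0 ≤ y 1 * b := by positivity
              have hnn2 : 0 ≤ Real.sqrt (2 * y 0 * y 1) := Real.sqrt_nonneg _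
              nlinarith
            rw [h1, h2]; ring
          rw [hval]
    · exact ⟨_, hmem 1 (1/2) (by norm_num) (by norm_num) (by norm_num)⟩
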